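/- For every α ≥ β₀* and every x₂ > 0, one has G(α x₂, x₂; α) ≥ (α/β₀*) · G(β₀* x₂, x₂; β₀*). -/

import Mathlib

/-- The value function `G(x₁, x₂; β)` of the barrier strategy with barrier `β`
and ruin level `α₀`. -/
noncomputable def Gb (α₀ ζ₁ ζ₂ β x₁ x₂ : ℝ) : ℝ :=
  α₀ * x₂ * ((x₁ / (α₀ * x₂)) ^ ζ₁ - (x₁ / (α₀ * x₂)) ^ ζ₂) /
    (ζ₁ * (β / α₀) ^ (ζ₁ - 1) - ζ₂ * (β / α₀) ^ (ζ₂ - 1))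

lemma stmt8_aux (ζ₁ ζ₂ a b : ℝ) (h21 : ζ₁ ≤ ζ₂) (hab : a ≤ b)
    (hDa : 0 < ζ₂ * a - ζ₁) (hDb : 0 < ζ₂ * b - ζ₁) :
    (a - 1) / (ζ₂ * a - ζ₁) ≤ (b - 1) / (ζ₂ * b - ζ₁) := by
  rw [div_le_div_iff₀ hDa hDb]
  nlinarith [mul_nonneg (sub_nonneg.2 h21) (sub_nonneg.2 hab)]

/-- for every `α ≥ β₀*` and `x₂ > 0`,
`G(αx₂, x₂; α) ≥ (α/β₀*) G(β₀*x₂, x₂; β₀*)`. -/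
theorem stmt_8 (μA μL δ σA σL ρ ζ₁ ζ₂ α₀ β₀ : ℝ)
    (hσA : 0 < σA) (hσL : 0 < σL) (hρ₁ : -1 < ρ) (hρ₂ : ρ < 1)
    (hμ : μL < μA) (hδ : μA < δ)
    (hroot₁ : (1 / 2) * (σA ^ 2 + σL ^ 2 - 2 * ρ * σA * σL) * ζ₁ * (ζ₁ - 1)
      + (μA - μL) * ζ₁ + (μL - δ) = 0)
    (hroot₂ : (1 / 2) * (σA ^ 2 + σL ^ 2 - 2 * ρ * σA * σL) * ζ₂ * (ζ₂ - 1)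
      + (μA - μL) * ζ₂ + (μL - δ) = 0)
    (hζlt : ζ₁ < ζ₂) (hζ₁ : ζ₁ < 0) (hζ₂ : 1 < ζ₂)
    (hα₀ : 0 < α₀)
    (hβ₀ : β₀ = α₀ * (ζ₁ * (ζ₁ - 1) / (ζ₂ * (ζ₂ - 1))) ^ (1 / (ζ₂ - ζ₁))) :
    ∀ α : ℝ, β₀ ≤ α → ∀ x₂ : ℝ, 0 < x₂ →
      (α / β₀) * Gb α₀ ζ₁ ζ₂ β₀ (β₀ * x₂) x₂ ≤ Gb α₀ ζ₁ ζ₂ α (α * x₂) x₂ := by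
  intro α hα x₂ hx₂
  have hζ21 : (0:ℝ) < ζ₂ - ζ₁ := by linarith
  have hX : (0:ℝ) < ζ₁ * (ζ₁ - 1) / (ζ₂ * (ζ₂ - 1)) := by
    apply div_pos <;> nlinarith
  have hβ₀pos : 0 < β₀ := by
    rw [hβ₀]; exact mul_pos hα₀ (Real.rpow_pos_of_pos hX _)
  have hαpos : 0 < α := lt_of_lt_of_le hβ₀pos hα
  -- key rewriting of Gb along the diagonal x₁ = β x₂
  have key : ∀ β : ℝ, 0 < β → Gb α₀ ζ₁ ζ₂ β (β * x₂) x₂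
      = α₀ * x₂ * ((β / α₀) *
          (((β / α₀) ^ (ζ₂ - ζ₁) - 1) / (ζ₂ * (β / α₀) ^ (ζ₂ - ζ₁) - ζ₁))) := by
    intro β hβ
    have hw : 0 < β / α₀ := div_pos hβ hα₀
    set w := β / α₀ with hw_def
    have hratio : β * x₂ / (α₀ * x₂) = w := by
      rw [mul_comm β x₂, mul_comm α₀ x₂, mul_div_mul_left β α₀ hx₂.ne']
    have ht : (0:ℝ) < w ^ (ζ₂ - ζ₁) := Real.rpow_pos_of_pos hw _
    set t := w ^ (ζ₂ - ζ₁) with ht_def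
    have h1 : w ^ ζ₂ = w ^ (ζ₁ - 1) * w * t := by
      rw [ht_def, ← Real.rpow_add_one hw.ne' (ζ₁ - 1), ← Real.rpow_add hw]
      congr 1; ring
    have h2 : w ^ (ζ₂ - 1) = w ^ (ζ₁ - 1) * t := by
      rw [ht_def, ← Real.rpow_add hw]
      congr 1; ring
    have h3 : w ^ ζ₁ = w ^ (ζ₁ - 1) * w := by
      nth_rewrite 1 [show ζ₁ = (ζ₁ - 1) + 1 by ring]
      exact Real.rpow_add_one hw.ne' _
    have hc : w ^ (ζ₁ - 1) ≠ 0 := (Real.rpow_pos_of_pos hw _).ne'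
    have hD : ζ₂ * t - ζ₁ ≠ 0 := by nlinarith
    have hD' : ζ₁ - ζ₂ * t ≠ 0 := fun h => hD (by linarith)
    have step : α₀ * x₂ * (w ^ (ζ₁ - 1) * w - w ^ (ζ₁ - 1) * w * t) /
        (ζ₁ * w ^ (ζ₁ - 1) - ζ₂ * (w ^ (ζ₁ - 1) * t))
        = α₀ * x₂ * (w - w * t) / (ζ₁ - ζ₂ * t) := by
      rw [show α₀ * x₂ * (w ^ (ζ₁ - 1) * w - w ^ (ζ₁ - 1) * w * t)
            = w ^ (ζ₁ - 1) * (α₀ * x₂ * (w - w * t)) by ring,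
          show ζ₁ * w ^ (ζ₁ - 1) - ζ₂ * (w ^ (ζ₁ - 1) * t)
            = w ^ (ζ₁ - 1) * (ζ₁ - ζ₂ * t) by ring,
          mul_div_mul_left _ _ hc]
    rw [Gb, hratio, h1, h2, h3, step]
    rw [show ζ₁ - ζ₂ * t = -(ζ₂ * t - ζ₁) by ring, div_neg]
    field_simp
    ring
  rw [key β₀ hβ₀pos, key α hαpos]
  set u := β₀ / α₀ with hu_def
  set v := α / α₀ with hv_def
  have hu : 0 < u := div_pos hβ₀pos hα₀
  have hv : 0 < v := div_pos hαpos hα₀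
  have huv : u ≤ v := by rw [hu_def, hv_def]; gcongr
  set a := u ^ (ζ₂ - ζ₁) with ha_def
  set b := v ^ (ζ₂ - ζ₁) with hb_def
  have ha : 0 < a := Real.rpow_pos_of_pos hu _
  have hb : 0 < b := Real.rpow_pos_of_pos hv _
  have hab : a ≤ b := Real.rpow_le_rpow hu.le huv hζ21.le
  have hζ₂pos : (0:ℝ) < ζ₂ := by linarith
  have hDa : 0 < ζ₂ * a - ζ₁ := by
    have := mul_pos hζ₂pos ha; linarith
  have hDb : 0 < ζ₂ * b - ζ₁ := by
    have := mul_pos hζ₂pos hb; linarith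
  have hcore : (a - 1) / (ζ₂ * a - ζ₁) ≤ (b - 1) / (ζ₂ * b - ζ₁) :=
    stmt8_aux ζ₁ ζ₂ a b hζlt.le hab hDa hDb
  have hvu : α / β₀ * u = v := by
    rw [hu_def, hv_def]; field_simp
  calc α / β₀ * (α₀ * x₂ * (u * ((a - 1) / (ζ₂ * a - ζ₁))))
      = α₀ * x₂ * v * ((a - 1) / (ζ₂ * a - ζ₁)) := by rw [← hvu]; ring
    _ ≤ α₀ * x₂ * v * ((b - 1) / (ζ₂ * b - ζ₁)) := by
        apply mul_le_mul_of_nonneg_left hcore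
        positivity
    _ = α₀ * x₂ * (v * ((b - 1) / (ζ₂ * b - ζ₁))) := by ring
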